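/- Let δ ⊂ ℝ^n be a rational convex polyhedral cone of dimension n. For a face τ of δ, let cone_δ(τ) be the cone generated by u′−u with u′ ∈ δ, u ∈ τ, and let (cone_δ(τ))^∨ ⊂ (ℝ^n)* be its dual cone. Then (cone_δ(τ))^∨ = δ̌ ∩ τ^⊥, where δ̌ is the dual cone of δ and τ^⊥ = {φ ∈ (ℝ^n)* : φ|_τ = 0}; moreover the map τ ↦ (cone_δ(τ))^∨ is an inclusion-reversing bijection between the faces of δ and the faces of δ̌. -/

import Mathlib

open Finset

/-- The standard pairing between ℝⁿ and its dual (identified with ℝⁿ). -/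
def dotR {n : ℕ} (φ v : Fin n → ℝ) : ℝ := ∑ i, φ i * v i

/-- The dual cone of a subset of ℝⁿ. -/
def dualCone {n : ℕ} (s : Set (Fin n → ℝ)) : Set (Fin n → ℝ) :=
  {φ | ∀ v ∈ s, 0 ≤ dotR φ v}

/-- The annihilator {φ : φ|_s = 0} of a subset of ℝⁿ. -/
def perpSet {n : ℕ} (s : Set (Fin n → ℝ)) : Set (Fin n → ℝ) :=
  {φ | ∀ v ∈ s, dotR φ v = 0}

/-- The faces of a closed convex cone δ: the subsets cut out on δ by supporting
functionals φ ∈ δ̌ (this includes δ itself, via φ = 0). -/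
def facesOf {n : ℕ} (δ : Set (Fin n → ℝ)) : Set (Set (Fin n → ℝ)) :=
  {F | ∃ φ ∈ dualCone δ, F = {v ∈ δ | dotR φ v = 0}}

namespace Stmt18Aux

variable {n : ℕ}


variable {n : ℕ}

lemma dotR_comm (φ v : Fin n → ℝ) : dotR φ v = dotR v φ := by
  simp [dotR, mul_comm]

lemma dotR_zero_right (φ : Fin n → ℝ) : dotR φ 0 = 0 := by simp [dotR]

lemma dotR_zero_left (v : Fin n → ℝ) : dotR 0 v = 0 := by simp [dotR]

lemma dotR_sub_right (φ u v : Fin n → ℝ) : dotR φ (u - v) = dotR φ u - dotR φ v := by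
  simp [dotR, mul_sub, Finset.sum_sub_distrib]

lemma dotR_sum_right {ι : Type*} (φ : Fin n → ℝ) (s : Finset ι) (f : ι → Fin n → ℝ) :
    dotR φ (∑ i ∈ s, f i) = ∑ i ∈ s, dotR φ (f i) := by
  simp only [dotR]
  rw [Finset.sum_comm]
  congr 1; ext j
  simp [Finset.mul_sum]

lemma dotR_sum_left {ι : Type*} (v : Fin n → ℝ) (s : Finset ι) (f : ι → Fin n → ℝ) :
    dotR (∑ i ∈ s, f i) v = ∑ i ∈ s, dotR (f i) v := by
  rw [dotR_comm, dotR_sum_right]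
  exact Finset.sum_congr rfl fun i _ => dotR_comm _ _

lemma dotR_smul_right (φ v : Fin n → ℝ) (c : ℝ) : dotR φ (c • v) = c * dotR φ v := by
  simp [dotR, Finset.mul_sum]; ring_nf
  exact Finset.sum_congr rfl fun i _ => by ring


def coneOf (G : Finset (Fin n → ℝ)) : Set (Fin n → ℝ) :=
  {x | ∃ c : (Fin n → ℝ) → ℝ, (∀ g, 0 ≤ c g) ∧ x = ∑ g ∈ G, c g • g}

lemma coneOf_mono {S G : Finset (Fin n → ℝ)} (h : S ⊆ G) : coneOf S ⊆ coneOf G := by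
  classical
  rintro x ⟨c, hc, rfl⟩
  refine ⟨fun g => if g ∈ S then c g else 0, fun g => by dsimp only; split <;> simp [hc], ?_⟩
  rw [← Finset.sum_subset h (fun g _ hg => by simp [hg])]
  exact Finset.sum_congr rfl fun g hg => by simp [hg]






lemma caratheodory (G : Finset (Fin n → ℝ)) :
    ∀ x ∈ coneOf G, ∃ S : Finset (Fin n → ℝ), S ⊆ G ∧
      LinearIndependent ℝ (fun s : {g // g ∈ S} => (s : Fin n → ℝ)) ∧ x ∈ coneOf S := by
  classical
  induction G using Finset.strongInduction with
  | _ G ih =>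
    intro x hx
    by_cases hind : LinearIndependent ℝ (fun s : {g // g ∈ G} => (s : Fin n → ℝ))
    · exact ⟨G, subset_rfl, hind, hx⟩
    obtain ⟨c, hc, rfl⟩ := hx
    obtain ⟨d, hd0, i, hdi⟩ := Fintype.not_linearIndependent_iff.mp hind
    obtain ⟨e, he0, j, hej⟩ : ∃ e : {g // g ∈ G} → ℝ,
        ∑ k, e k • (k : Fin n → ℝ) = 0 ∧ ∃ j, 0 < e j := by
      rcases hdi.lt_or_gt with h | h
      · exact ⟨-d, by simp only [Pi.neg_apply, neg_smul, Finset.sum_neg_distrib]; simp; exact hd0, i, by simpa using h⟩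
      · exact ⟨d, hd0, i, h⟩
    obtain ⟨k₀, hk₀F, hk₀min⟩ := Finset.exists_min_image
      (Finset.univ.filter fun k => 0 < e k) (fun k => c k / e k) ⟨j, by simpa using hej⟩
    have hek₀ : 0 < e k₀ := by simpa using hk₀F
    set t : ℝ := c k₀ / e k₀ with ht
    have ht0 : 0 ≤ t := div_nonneg (hc _) hek₀.le
    set c' : (Fin n → ℝ) → ℝ := fun v => if h : v ∈ G then c v - t * e ⟨v, h⟩ else 0 with hc'
    have hc'0 : ∀ v, 0 ≤ c' v := by
      intro v
      rw [hc']; dsimp only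
      split
      · rename_i h
        rcases le_or_gt (e ⟨v, h⟩) 0 with he | he
        · nlinarith [hc v]
        · have := hk₀min ⟨v, h⟩ (by simpa using he)
          have := (le_div_iff₀ he).mp this
          linarith
      · exact le_refl 0
    have hsum : ∑ g ∈ G, c g • g = ∑ g ∈ G, c' g • g := by
      rw [← Finset.sum_coe_sort G (fun g => c g • g), ← Finset.sum_coe_sort G (fun g => c' g • g)]
      have : ∀ k : {g // g ∈ G}, c' (k : Fin n → ℝ) • (k : Fin n → ℝ)
          = c (k : Fin n → ℝ) • (k : Fin n → ℝ) - (t * e k) • (k : Fin n → ℝ) := by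
        intro k
        rw [hc']; dsimp only
        rw [dif_pos k.2, sub_smul]
      rw [Finset.sum_congr rfl (fun k _ => this k)]
      rw [Finset.sum_sub_distrib]
      have : ∑ k : {g // g ∈ G}, (t * e k) • (k : Fin n → ℝ)
          = t • ∑ k : {g // g ∈ G}, e k • (k : Fin n → ℝ) := by
        rw [Finset.smul_sum]
        exact Finset.sum_congr rfl fun k _ => by rw [smul_smul]
      rw [this, he0, smul_zero, sub_zero]
    have hck₀ : c' (k₀ : Fin n → ℝ) = 0 := by
      rw [hc']; dsimp only
      rw [dif_pos k₀.2]
      have : (⟨(k₀ : Fin n → ℝ), k₀.2⟩ : {g // g ∈ G}) = k₀ := Subtype.ext rfl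
      rw [this, ht, div_mul_cancel₀ _ hek₀.ne', sub_self]
    have hxe : ∑ g ∈ G, c g • g ∈ coneOf (G.erase (k₀ : Fin n → ℝ)) := by
      refine ⟨c', hc'0, ?_⟩
      rw [hsum, ← Finset.sum_erase G (by rw [hck₀, zero_smul])]
    obtain ⟨S, hS1, hS2, hS3⟩ := ih (G.erase (k₀ : Fin n → ℝ))
      (Finset.erase_ssubset k₀.2) _ hxe
    exact ⟨S, hS1.trans (Finset.erase_subset _ _), hS2, hS3⟩


lemma isClosed_coneOf_of_linearIndependent (S : Finset (Fin n → ℝ))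
    (hS : LinearIndependent ℝ (fun s : {g // g ∈ S} => (s : Fin n → ℝ))) :
    IsClosed (coneOf S) := by
  classical
  set T : ({g // g ∈ S} → ℝ) →ₗ[ℝ] (Fin n → ℝ) :=
    { toFun := fun c => ∑ k : {g // g ∈ S}, c k • (k : Fin n → ℝ)
      map_add' := by
        intro a b; simp [add_smul, Finset.sum_add_distrib]
      map_smul' := by
        intro r a; simp [Finset.smul_sum, smul_smul] } with hT
  have hker : LinearMap.ker T = ⊥ := by
    rw [LinearMap.ker_eq_bot']
    intro m hm
    exact funext fun k => Fintype.linearIndependent_iff.mp hS m hm k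
  have hemb := LinearMap.isClosedEmbedding_of_injective hker
  have himg : coneOf S = T '' {c | ∀ k, 0 ≤ c k} := by
    ext x
    constructor
    · rintro ⟨c, hc, rfl⟩
      refine ⟨fun k => c (k : Fin n → ℝ), fun k => hc _, ?_⟩
      exact (Finset.sum_coe_sort S (fun g => c g • g))
    · rintro ⟨c, hc, rfl⟩
      refine ⟨fun v => if h : v ∈ S then c ⟨v, h⟩ else 0, ?_, ?_⟩
      · intro v; dsimp only; split
        · exact hc _
        · exact le_refl 0
      show T c = _
      rw [← Finset.sum_coe_sort S (fun g => (if h : g ∈ S then c ⟨g, h⟩ else 0) • g)]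
      show ∑ k : {g // g ∈ S}, c k • (k : Fin n → ℝ) = _
      exact (Finset.sum_congr rfl fun k _ => by rw [dif_pos k.2]).symm
  rw [himg]
  refine hemb.isClosedMap _ ?_
  have : {c : {g // g ∈ S} → ℝ | ∀ k, 0 ≤ c k} = ⋂ k, {c | 0 ≤ c k} := by
    ext c; simp [Set.mem_iInter]
  rw [this]
  exact isClosed_iInter fun k => isClosed_le continuous_const (continuous_apply k)


lemma isClosed_coneOf (G : Finset (Fin n → ℝ)) : IsClosed (coneOf G) := by
  classical
  have : coneOf G = ⋃ S ∈ G.powerset.filter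
      (fun S => LinearIndependent ℝ (fun s : {g // g ∈ S} => (s : Fin n → ℝ))), coneOf S := by
    ext x
    simp only [Set.mem_iUnion, Finset.mem_filter, Finset.mem_powerset]
    constructor
    · intro hx
      obtain ⟨S, h1, h2, h3⟩ := caratheodory G x hx
      exact ⟨S, ⟨h1, h2⟩, h3⟩
    · rintro ⟨S, ⟨h1, _⟩, h3⟩
      exact coneOf_mono h1 h3
  rw [this]
  exact Set.Finite.isClosed_biUnion (Finset.finite_toSet _)
    (fun S hS => isClosed_coneOf_of_linearIndependent S (Finset.mem_filter.mp hS).2)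

-- zero and closure properties
lemma zero_mem_coneOf (G : Finset (Fin n → ℝ)) : (0 : Fin n → ℝ) ∈ coneOf G :=
  ⟨0, fun g => le_refl 0, by simp⟩

lemma add_mem_coneOf {G : Finset (Fin n → ℝ)} {x y : Fin n → ℝ}
    (hx : x ∈ coneOf G) (hy : y ∈ coneOf G) : x + y ∈ coneOf G := by
  obtain ⟨c, hc, rfl⟩ := hx
  obtain ⟨d, hd, rfl⟩ := hy
  exact ⟨c + d, fun g => add_nonneg (hc g) (hd g),
    by simp [add_smul, Finset.sum_add_distrib]⟩

lemma smul_mem_coneOf {G : Finset (Fin n → ℝ)} {x : Fin n → ℝ} {r : ℝ}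
    (hr : 0 ≤ r) (hx : x ∈ coneOf G) : r • x ∈ coneOf G := by
  obtain ⟨c, hc, rfl⟩ := hx
  exact ⟨r • c, fun g => mul_nonneg hr (hc g),
    by simp [Finset.smul_sum, smul_smul]⟩


lemma inner_eq_dotR (x y : EuclideanSpace ℝ (Fin n)) :
    (inner ℝ x y : ℝ) = dotR x.ofLp y.ofLp := by
  simp [PiLp.inner_apply, RCLike.inner_apply, dotR, mul_comm]

lemma bidual_subset (G : Finset (Fin n → ℝ)) :
    dualCone (dualCone (coneOf G)) ⊆ coneOf G := by
  let K : ProperCone ℝ (EuclideanSpace ℝ (Fin n)) :=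
    { carrier := WithLp.ofLp ⁻¹' coneOf G
      add_mem' := fun hx hy => by simpa using add_mem_coneOf hx hy
      zero_mem' := by simpa using zero_mem_coneOf G
      smul_mem' := fun c x hx => by simpa [NNReal.smul_def] using smul_mem_coneOf c.2 hx
      isClosed' := (isClosed_coneOf G).preimage (PiLp.continuous_ofLp 2 _) }
  have h := ProperCone.innerDual_innerDual K
  intro w hw
  have hK : WithLp.toLp 2 w ∈ K := by
    rw [← h, ProperCone.mem_innerDual]
    intro y hy
    rw [inner_eq_dotR, dotR_comm]
    apply hw
    intro v hv
    have := ProperCone.mem_innerDual.mp hy (x := WithLp.toLp 2 v) hv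
    rw [inner_eq_dotR, dotR_comm] at this
    exact this
  exact hK


lemma mem_coneOf_of_mem {G : Finset (Fin n → ℝ)} {g : Fin n → ℝ} (hg : g ∈ G) :
    g ∈ coneOf G := by
  classical
  refine ⟨fun v => if v = g then 1 else 0, fun v => by dsimp only; split <;> norm_num, ?_⟩
  rw [Finset.sum_congr rfl (fun v _ => by rw [ite_smul, one_smul, zero_smul])]
  rw [show (∑ v ∈ G, if v = g then v else 0) = ∑ v ∈ G, if v = g then id v else 0 from rfl,
    Finset.sum_ite_eq' G g id, if_pos hg]
  rfl

lemma vanish_on_face {G : Finset (Fin n → ℝ)} {φ ψ : Fin n → ℝ}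
    (hφ : φ ∈ dualCone (coneOf G)) (hψ : ψ ∈ dualCone (coneOf G))
    (hG : ∀ g ∈ G, dotR φ g = 0 → dotR ψ g = 0) :
    ∀ v ∈ coneOf G, dotR φ v = 0 → dotR ψ v = 0 := by
  rintro v ⟨c, hc, rfl⟩ hv0
  rw [dotR_sum_right] at hv0 ⊢
  have hterm : ∀ g ∈ G, dotR φ (c g • g) = c g * dotR φ g := fun g _ => dotR_smul_right _ _ _
  rw [Finset.sum_congr rfl hterm] at hv0
  have hnn : ∀ g ∈ G, 0 ≤ c g * dotR φ g :=
    fun g hg => mul_nonneg (hc g) (hφ g (mem_coneOf_of_mem hg))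
  have hzero := (Finset.sum_eq_zero_iff_of_nonneg hnn).mp hv0
  refine Finset.sum_eq_zero fun g hg => ?_
  rw [dotR_smul_right]
  rcases eq_or_ne (dotR φ g) 0 with h | h
  · rw [hG g hg h, mul_zero]
  · have : c g = 0 := by
      have := hzero g hg
      rcases mul_eq_zero.mp this with h' | h'
      · exact h'
      · exact absurd h' h
    rw [this, zero_mul]


end Stmt18Aux

open Stmt18Aux in
/-- For a full-dimensional rational polyhedral cone δ ⊆ ℝⁿ and a face τ of δ, the
dual cone of cone_δ(τ) (the cone generated by differences u′ − u, u′ ∈ δ, u ∈ τ)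
equals δ̌ ∩ τ^⊥, and τ ↦ δ̌ ∩ τ^⊥ is an inclusion-reversing bijection from the
faces of δ onto the faces of δ̌. -/
theorem stmt18 (n : ℕ) (δ : Set (Fin n → ℝ))
    (G : Finset (Fin n → ℝ))
    (hrat : ∀ g ∈ G, ∀ i, ∃ q : ℚ, g i = (q : ℝ))
    (hgen : δ = {x | ∃ c : (Fin n → ℝ) → ℝ, (∀ g, 0 ≤ c g) ∧ x = ∑ g ∈ G, c g • g})
    (hfull : Submodule.span ℝ δ = ⊤)
    (τ : Set (Fin n → ℝ)) (hτ : τ ∈ facesOf δ) :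
    dualCone {x | ∃ u' ∈ δ, ∃ u ∈ τ, x = u' - u} = dualCone δ ∩ perpSet τ ∧
    Set.BijOn (fun σ => dualCone δ ∩ perpSet σ) (facesOf δ) (facesOf (dualCone δ)) ∧
    (∀ τ₁ ∈ facesOf δ, ∀ τ₂ ∈ facesOf δ, τ₁ ⊆ τ₂ →
      dualCone δ ∩ perpSet τ₂ ⊆ dualCone δ ∩ perpSet τ₁) := by
  classical
  have hδ : δ = coneOf G := hgen
  subst hδ
  set δ : Set (Fin n → ℝ) := coneOf G with hδdef
  have hzero : (0 : Fin n → ℝ) ∈ δ := zero_mem_coneOf G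
  have hGδ : ∀ g ∈ G, g ∈ δ := fun g hg => mem_coneOf_of_mem hg
  refine ⟨?_, ⟨?_, ?_, ?_⟩, ?_⟩
  · -- Part 1: dual of cone_δ(τ) = δ̌ ∩ τ^⊥
    obtain ⟨φ₀, hφ₀, hτeq⟩ := hτ
    have hτδ : τ ⊆ δ := by rw [hτeq]; exact fun v hv => hv.1
    have h0τ : (0 : Fin n → ℝ) ∈ τ := by
      rw [hτeq]; exact ⟨hzero, dotR_zero_right φ₀⟩
    ext ψ
    constructor
    · intro hψ
      have h1 : ψ ∈ dualCone δ := by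
        intro v hv
        exact hψ (v - 0) ⟨v, hv, 0, h0τ, rfl⟩ |>.trans_eq (by rw [sub_zero])
      refine ⟨h1, ?_⟩
      intro u hu
      have h2 : 0 ≤ dotR ψ (0 - u) := hψ (0 - u) ⟨0, hzero, u, hu, rfl⟩
      rw [dotR_sub_right, dotR_zero_right] at h2
      have h3 : 0 ≤ dotR ψ u := h1 u (hτδ hu)
      linarith
    · rintro ⟨h1, h2⟩ x ⟨u', hu', u, hu, rfl⟩
      rw [dotR_sub_right]
      have := h2 u hu
      have := h1 u' hu'
      linarith
  · -- MapsTo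
    rintro σ ⟨φ, hφ, rfl⟩
    set w : Fin n → ℝ := ∑ g ∈ G.filter (fun g => dotR φ g = 0), g with hw
    have hwδ : w ∈ δ := by
      refine ⟨fun v => if dotR φ v = 0 then 1 else 0,
        fun v => by dsimp only; split <;> norm_num, ?_⟩
      rw [hw, Finset.sum_filter]
      exact Finset.sum_congr rfl fun g _ => by
        by_cases hc : dotR φ g = 0 <;> simp [hc]
    have hφw : dotR φ w = 0 := by
      rw [hw, dotR_sum_right]
      exact Finset.sum_eq_zero fun g hg => (Finset.mem_filter.mp hg).2
    refine ⟨w, ?_, ?_⟩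
    · intro ψ hψ
      rw [dotR_comm]
      exact hψ w hwδ
    · ext ψ
      constructor
      · rintro ⟨hψd, hψp⟩
        refine ⟨hψd, ?_⟩
        rw [dotR_comm]
        exact hψp w ⟨hwδ, hφw⟩
      · rintro ⟨hψd, hw0⟩
        refine ⟨hψd, ?_⟩
        have hterms : ∀ g ∈ G.filter (fun g => dotR φ g = 0), dotR ψ g = 0 := by
          have hsum : ∑ g ∈ G.filter (fun g => dotR φ g = 0), dotR ψ g = 0 := by
            have hψw : dotR ψ w = 0 := by rw [dotR_comm]; exact hw0
            rw [hw, dotR_sum_right] at hψw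
            exact hψw
          have hnn : ∀ g ∈ G.filter (fun g => dotR φ g = 0), 0 ≤ dotR ψ g :=
            fun g hg => hψd g (hGδ g (Finset.mem_filter.mp hg).1)
          exact fun g hg => (Finset.sum_eq_zero_iff_of_nonneg hnn).mp hsum g hg
        rintro v ⟨hvδ, hv0⟩
        refine vanish_on_face hφ hψd ?_ v hvδ hv0
        intro g hg h0
        exact hterms g (Finset.mem_filter.mpr ⟨hg, h0⟩)
  · -- InjOn
    have recover : ∀ σ ∈ facesOf δ,
        σ = {v ∈ δ | ∀ ψ ∈ dualCone δ ∩ perpSet σ, dotR ψ v = 0} := by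
      rintro σ ⟨φ, hφ, rfl⟩
      ext v
      constructor
      · intro hv
        exact ⟨hv.1, fun ψ hψ => hψ.2 v hv⟩
      · rintro ⟨hvδ, hval⟩
        refine ⟨hvδ, hval φ ⟨hφ, fun u hu => hu.2⟩⟩
    intro σ₁ h₁ σ₂ h₂ heq
    dsimp only at heq
    rw [recover σ₁ h₁, recover σ₂ h₂, heq]
  · -- SurjOn
    rintro Φ ⟨w, hwdd, rfl⟩
    have hwδ : w ∈ δ := bidual_subset G hwdd
    set h : (Fin n → ℝ) → (Fin n → ℝ) := fun g =>
      if hg : ∃ ψ, (ψ ∈ dualCone δ ∧ dotR w ψ = 0) ∧ 0 < dotR ψ g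
      then hg.choose else 0 with hhdef
    have hh : ∀ g, (h g ∈ dualCone δ ∧ dotR w (h g) = 0) ∨ h g = 0 := by
      intro g
      rw [hhdef]; dsimp only
      split
      · rename_i hg
        exact Or.inl hg.choose_spec.1
      · exact Or.inr rfl
    have hhδ : ∀ g, h g ∈ dualCone δ := by
      intro g
      rcases hh g with h' | h'
      · exact h'.1
      · rw [h']; intro v _; rw [dotR_zero_left]
    set φs : Fin n → ℝ := ∑ g ∈ G, h g with hφs
    have hφsδ : φs ∈ dualCone δ := by
      intro v hv
      rw [hφs, dotR_sum_left]
      exact Finset.sum_nonneg fun g _ => hhδ g v hv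
    have hφsw : dotR φs w = 0 := by
      rw [hφs, dotR_sum_left]
      refine Finset.sum_eq_zero fun g _ => ?_
      rcases hh g with h' | h'
      · rw [dotR_comm]; exact h'.2
      · rw [h', dotR_zero_left]
    refine ⟨{v ∈ δ | dotR φs v = 0}, ⟨φs, hφsδ, rfl⟩, ?_⟩
    dsimp only
    ext ψ
    constructor
    · rintro ⟨hψd, hψp⟩
      refine ⟨hψd, ?_⟩
      rw [dotR_comm]
      exact hψp w ⟨hwδ, hφsw⟩
    · rintro ⟨hψd, hψw⟩
      refine ⟨hψd, ?_⟩
      rintro v ⟨hvδ, hv0⟩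
      refine vanish_on_face hφsδ hψd ?_ v hvδ hv0
      intro g hgG hg0
      by_cases hex : ∃ ψ', (ψ' ∈ dualCone δ ∧ dotR w ψ' = 0) ∧ 0 < dotR ψ' g
      · exfalso
        have hpos : 0 < dotR (h g) g := by
          rw [hhdef]; dsimp only; rw [dif_pos hex]
          exact hex.choose_spec.2
        have hge : dotR (h g) g ≤ dotR φs g := by
          rw [hφs, dotR_sum_left]
          exact Finset.single_le_sum (fun g' _ => hhδ g' g (hGδ g hgG)) hgG
        rw [hg0] at hge
        linarith
      · push_neg at hex
        have h1 : ¬ (0 < dotR ψ g) := by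
          intro hlt
          exact absurd hlt (by simpa using hex ψ ⟨hψd, by rw [dotR_comm] at hψw ⊢; exact hψw⟩)
        have h2 : 0 ≤ dotR ψ g := hψd g (hGδ g hgG)
        exact le_antisymm (not_lt.mp h1) h2
  · -- inclusion-reversing
    rintro τ₁ _ τ₂ _ hsub ψ ⟨h1, h2⟩
    exact ⟨h1, fun v hv => h2 v (hsub hv)⟩
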